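/- Let n ≥ 2, h > 0, and suppose the configuration X ⊆ ℝⁿ has the property that every 2-coloring of any (n−2)-dimensional sphere of radius h in ℝⁿ contains a monochromatic isometric copy of X. Let T_h be a triangle with a height equal to h (i.e., three points a, b, c with the distance from c to line ab equal to h). Then for every coloring of ℝⁿ with any number of colors, there is a monochromatic copy of X or a rainbow copy of T_h. -/

import Mathlib

open Metric

variable {n : ℕ}

local notation "V" n => EuclideanSpace ℝ (Fin n)

/-- Map one orthonormal pair to another by a linear isometry equivalence. -/
lemma exists_linIsom_pair (u' e u e' : EuclideanSpace ℝ (Fin n))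
    (hu' : ‖u'‖ = 1) (he : ‖e‖ = 1) (hu : ‖u‖ = 1) (he' : ‖e'‖ = 1)
    (h1 : (inner ℝ u' e : ℝ) = 0) (h2 : (inner ℝ u e' : ℝ) = 0) :
    ∃ L : (V n) ≃ₗᵢ[ℝ] (V n), L u' = u ∧ L e = e' := by
  set R₁ := Submodule.reflection (ℝ ∙ (u' - u))ᗮ with hR₁def
  have hR₁ : R₁ u' = u := Submodule.reflection_sub (by rw [hu', hu])
  set e₁ := R₁ e with he₁def
  have he₁ : ‖e₁‖ = 1 := by rw [he₁def, R₁.norm_map, he]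
  set R₂ := Submodule.reflection (ℝ ∙ (e₁ - e'))ᗮ with hR₂def
  have hR₂e : R₂ e₁ = e' := Submodule.reflection_sub (by rw [he₁, he'])
  have hmem : u ∈ (ℝ ∙ (e₁ - e'))ᗮ := by
    rw [Submodule.mem_orthogonal_singleton_iff_inner_left]
    have h3 : (inner ℝ e₁ u : ℝ) = 0 := by
      rw [he₁def, ← hR₁, R₁.inner_map_map, real_inner_comm, h1]
    have h4 : (inner ℝ e' u : ℝ) = 0 := by rw [real_inner_comm, h2]
    rw [real_inner_comm, inner_sub_left, h3, h4, sub_zero]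
  have hR₂u : R₂ u = u := Submodule.reflection_mem_subspace_eq_self hmem
  exact ⟨R₁.trans R₂, by simp [LinearIsometryEquiv.trans_apply, hR₁, hR₂u],
    by simp [LinearIsometryEquiv.trans_apply, ← he₁def, hR₂e]⟩

/-- In dimension at least 2, any two points at distance at most `2*d` admit a point at
distance exactly `d` from both. -/
lemma exists_mid (hn : 2 ≤ n) {d : ℝ} (hd : 0 < d) (b y : EuclideanSpace ℝ (Fin n))
    (hby : dist b y ≤ 2 * d) : ∃ z, dist b z = d ∧ dist z y = d := by
  set v := y - b with hv
  -- a nonzero vector orthogonal to v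
  have horth : ∃ w₀ : V n, w₀ ∈ (ℝ ∙ v)ᗮ ∧ w₀ ≠ 0 := by
    by_contra hcon
    push_neg at hcon
    have hbot : (ℝ ∙ v)ᗮ = ⊥ := by
      rw [Submodule.eq_bot_iff]
      intro w hw
      exact hcon w hw
    rw [Submodule.orthogonal_eq_bot_iff] at hbot
    have h1 : Module.finrank ℝ (ℝ ∙ v) ≤ 1 := by
      by_cases hv0 : v = 0
      · rw [hv0, Submodule.span_zero_singleton]
        simp
      · rw [finrank_span_singleton hv0]
    rw [hbot] at h1
    have h2 : Module.finrank ℝ (⊤ : Submodule ℝ (V n)) = n := by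
      rw [finrank_top, finrank_euclideanSpace_fin]
    omega
  obtain ⟨w₀, hw₀mem, hw₀ne⟩ := horth
  have hw₀ : (inner ℝ v w₀ : ℝ) = 0 :=
    Submodule.mem_orthogonal_singleton_iff_inner_right.mp hw₀mem
  have hnv : ‖v‖ = dist b y := by rw [hv, dist_eq_norm, norm_sub_rev]
  set s := Real.sqrt (d ^ 2 - (‖v‖ / 2) ^ 2) with hs
  have hvle : (‖v‖ / 2) ^ 2 ≤ d ^ 2 := by
    have h1 : ‖v‖ / 2 ≤ d := by rw [hnv]; linarith
    have h2 : 0 ≤ ‖v‖ / 2 := by positivity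
    nlinarith
  have hs2 : s ^ 2 = d ^ 2 - (‖v‖ / 2) ^ 2 := Real.sq_sqrt (by linarith)
  set w := (s / ‖w₀‖) • w₀ with hw
  have hnw : ‖w‖ = s := by
    rw [hw, norm_smul, Real.norm_eq_abs, abs_div, abs_of_nonneg (Real.sqrt_nonneg _),
      abs_of_nonneg (norm_nonneg _), div_mul_cancel₀]
    exact norm_ne_zero_iff.mpr hw₀ne
  have hvw : (inner ℝ v w : ℝ) = 0 := by
    rw [hw, real_inner_smul_right, hw₀, mul_zero]
  have hna : ‖((1:ℝ)/2) • v‖ = ‖v‖ / 2 := by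
    rw [norm_smul, Real.norm_eq_abs, abs_of_pos (by norm_num : (0:ℝ) < 1/2)]
    ring
  have hin : (inner ℝ (((1:ℝ)/2) • v) w : ℝ) = 0 := by
    rw [real_inner_smul_left, hvw, mul_zero]
  refine ⟨b + ((1 : ℝ) / 2) • v + w, ?_, ?_⟩
  · have key : dist b (b + ((1:ℝ)/2) • v + w) ^ 2 = d ^ 2 := by
      rw [dist_eq_norm]
      have heq : b - (b + ((1:ℝ)/2) • v + w) = -(((1:ℝ)/2) • v + w) := by abel
      rw [heq, norm_neg, norm_add_sq_real, hin, hna, hnw, hs2]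
      ring
    have h1 : (0:ℝ) ≤ dist b (b + ((1:ℝ)/2) • v + w) := dist_nonneg
    nlinarith
  · have key : dist (b + ((1:ℝ)/2) • v + w) y ^ 2 = d ^ 2 := by
      rw [dist_eq_norm]
      have heq : (b + ((1:ℝ)/2) • v + w) - y = -(((1:ℝ)/2) • v) + w := by
        rw [hv]; abel_nf; module
      have hin2 : (inner ℝ (-(((1:ℝ)/2) • v)) w : ℝ) = 0 := by
        rw [inner_neg_left, hin, neg_zero]
      rw [heq, norm_add_sq_real, hin2, norm_neg, hna, hnw, hs2]
      ring
    have h1 : (0:ℝ) ≤ dist (b + ((1:ℝ)/2) • v + w) y := dist_nonneg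
    nlinarith

theorem stmt14 (n : ℕ) (hn : 2 ≤ n) (h : ℝ) (hh : 0 < h)
    (X : Set (EuclideanSpace ℝ (Fin n)))
    (hX : ∀ c u : EuclideanSpace ℝ (Fin n), ‖u‖ = 1 →
      ∀ κ : EuclideanSpace ℝ (Fin n) → Bool,
        ∃ f : EuclideanSpace ℝ (Fin n) ≃ᵢ EuclideanSpace ℝ (Fin n),
          (∀ x ∈ X, dist (f x) c = h ∧ (inner ℝ (f x - c) u : ℝ) = 0) ∧
          ∀ x ∈ X, ∀ y ∈ X, κ (f x) = κ (f y))
    (p q r : EuclideanSpace ℝ (Fin n)) (hpq : p ≠ q)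
    (hht : Metric.infDist r (affineSpan ℝ ({p, q} : Set (EuclideanSpace ℝ (Fin n))) :
      Set (EuclideanSpace ℝ (Fin n))) = h)
    (C : Type*) (χ : EuclideanSpace ℝ (Fin n) → C) :
    (∃ f : EuclideanSpace ℝ (Fin n) ≃ᵢ EuclideanSpace ℝ (Fin n),
        ∀ x ∈ X, ∀ y ∈ X, χ (f x) = χ (f y)) ∨
    (∃ f : EuclideanSpace ℝ (Fin n) ≃ᵢ EuclideanSpace ℝ (Fin n),
        χ (f p) ≠ χ (f q) ∧ χ (f p) ≠ χ (f r) ∧ χ (f q) ≠ χ (f r)) := by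
  classical
  by_cases hrain : ∃ f : EuclideanSpace ℝ (Fin n) ≃ᵢ EuclideanSpace ℝ (Fin n),
      χ (f p) ≠ χ (f q) ∧ χ (f p) ≠ χ (f r) ∧ χ (f q) ≠ χ (f r)
  · exact Or.inr hrain
  push_neg at hrain
  left
  set d := dist p q with hdef
  have hd : 0 < d := dist_pos.mpr hpq
  by_cases hc : ∀ A B : EuclideanSpace ℝ (Fin n), dist A B = d → χ A = χ B
  · -- χ is constant
    have two_step : ∀ b y : EuclideanSpace ℝ (Fin n), dist b y ≤ 2 * d → χ b = χ y := by
      intro b y hby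
      obtain ⟨z, hz1, hz2⟩ := exists_mid hn hd b y hby
      rw [hc b z hz1, hc z y hz2]
    have hconst : ∀ x y : EuclideanSpace ℝ (Fin n), χ x = χ y := by
      intro x y
      set A := {z : EuclideanSpace ℝ (Fin n) | χ z = χ x} with hA
      have hclopen : IsClopen A := by
        constructor
        · rw [← isOpen_compl_iff, Metric.isOpen_iff]
          intro b hb
          refine ⟨2 * d, by linarith, fun z hz => ?_⟩
          simp only [Set.mem_compl_iff, Set.mem_setOf_eq, hA] at hb ⊢
          intro hzx
          exact hb (by rw [two_step b z (le_of_lt (mem_ball'.mp hz)), hzx])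
        · rw [Metric.isOpen_iff]
          intro b hb
          refine ⟨2 * d, by linarith, fun z hz => ?_⟩
          simp only [Set.mem_setOf_eq, hA] at hb ⊢
          rw [← two_step b z (le_of_lt (mem_ball'.mp hz)), hb]
      have : A = Set.univ := hclopen.eq_univ ⟨x, rfl⟩
      have := Set.eq_univ_iff_forall.mp this y
      exact this.symm
    exact ⟨IsometryEquiv.refl _, fun x _ y _ => hconst _ _⟩
  push_neg at hc
  obtain ⟨A, B, hAB, hABne⟩ := hc
  -- setup on the source side
  set u' : EuclideanSpace ℝ (Fin n) := d⁻¹ • (q - p) with hu'def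
  have hqp : ‖q - p‖ = d := by rw [norm_sub_rev, ← dist_eq_norm, hdef]
  have hu' : ‖u'‖ = 1 := by
    rw [hu'def, norm_smul, Real.norm_eq_abs, abs_of_pos (by positivity), hqp,
      inv_mul_cancel₀ (ne_of_gt hd)]
  set sc : ℝ := (inner ℝ (q - p) (r - p) : ℝ) / d ^ 2 with hscdef
  set c₀ : EuclideanSpace ℝ (Fin n) := p + sc • (q - p) with hc₀def
  have horth : (inner ℝ (q - p) (r - c₀) : ℝ) = 0 := by
    have : r - c₀ = (r - p) - sc • (q - p) := by rw [hc₀def]; abel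
    rw [this, inner_sub_right, real_inner_smul_right, real_inner_self_eq_norm_sq, hqp,
      hscdef]
    field_simp
    ring
  have hc₀mem : c₀ ∈ (affineSpan ℝ ({p, q} : Set (EuclideanSpace ℝ (Fin n))) :
      Set (EuclideanSpace ℝ (Fin n))) := by
    have h1 := smul_vsub_vadd_mem_affineSpan_pair sc p q
    have h2 : sc • (q -ᵥ p) +ᵥ p = c₀ := by
      rw [hc₀def, vsub_eq_sub, vadd_eq_add]; abel
    rwa [h2] at h1
  have hrc₀ : dist r c₀ = h := by
    rw [← hht]
    refine le_antisymm ?_ (Metric.infDist_le_dist_of_mem hc₀mem)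
    by_contra hlt
    push_neg at hlt
    obtain ⟨y, hy, hylt⟩ := (Metric.infDist_lt_iff
      ⟨p, left_mem_affineSpan_pair ℝ p q⟩).mp hlt
    -- Pythagoras: dist r c₀ ≤ dist r y for y on the line
    have hyc : y - c₀ ∈ vectorSpan ℝ ({p, q} : Set (EuclideanSpace ℝ (Fin n))) := by
      have := AffineSubspace.vsub_mem_direction hy hc₀mem
      rwa [direction_affineSpan, vsub_eq_sub] at this
    rw [vectorSpan_pair_rev, Submodule.mem_span_singleton] at hyc
    obtain ⟨m, hm⟩ := hyc
    have hinner : (inner ℝ (r - c₀) (y - c₀) : ℝ) = 0 := by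
      rw [← hm, vsub_eq_sub, real_inner_smul_right, real_inner_comm, horth, mul_zero]
    have hpyth : dist r y ^ 2 = dist r c₀ ^ 2 + dist y c₀ ^ 2 := by
      rw [dist_eq_norm, dist_eq_norm, dist_eq_norm]
      have : r - y = (r - c₀) + -(y - c₀) := by abel
      rw [this, norm_add_sq_real, inner_neg_right, hinner, neg_zero, norm_neg]
      ring
    nlinarith [dist_nonneg (x := r) (y := y), dist_nonneg (x := r) (y := c₀),
      dist_nonneg (x := y) (y := c₀)]
  set e : EuclideanSpace ℝ (Fin n) := h⁻¹ • (r - c₀) with hedef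
  have hrc₀n : ‖r - c₀‖ = h := by rw [← dist_eq_norm, hrc₀]
  have he : ‖e‖ = 1 := by
    rw [hedef, norm_smul, Real.norm_eq_abs, abs_of_pos (by positivity), hrc₀n,
      inv_mul_cancel₀ (ne_of_gt hh)]
  have hue : (inner ℝ u' e : ℝ) = 0 := by
    rw [hu'def, hedef, real_inner_smul_left, real_inner_smul_right, horth, mul_zero, mul_zero]
  set t : ℝ := sc * d with htdef
  have hd0 : d ≠ 0 := ne_of_gt hd
  have hpc₀ : p - c₀ = (-t) • u' := by
    rw [hc₀def, hu'def, htdef]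
    match_scalars <;> field_simp <;> ring
  have hqc₀ : q - c₀ = (d - t) • u' := by
    rw [hc₀def, hu'def, htdef]
    match_scalars <;> field_simp <;> ring
  have hre : r - c₀ = h • e := by
    rw [hedef, smul_smul, mul_inv_cancel₀ (ne_of_gt hh), one_smul]
  -- target side
  set u : EuclideanSpace ℝ (Fin n) := d⁻¹ • (B - A) with hudef
  have hBA : ‖B - A‖ = d := by rw [norm_sub_rev, ← dist_eq_norm, hAB]
  have hu : ‖u‖ = 1 := by
    rw [hudef, norm_smul, Real.norm_eq_abs, abs_of_pos (by positivity), hBA,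
      inv_mul_cancel₀ (ne_of_gt hd)]
  set c : EuclideanSpace ℝ (Fin n) := A + t • u with hcdef
  have hAc : A - c = (-t) • u := by
    rw [hcdef]; match_scalars <;> ring
  have hBc : B - c = (d - t) • u := by
    rw [hcdef, hudef]; match_scalars <;> field_simp <;> ring
  obtain ⟨f, H1, H2⟩ := hX c u hu (fun x => decide (χ x = χ A))
  -- key claim: every point of the sphere gets color χ A or χ B
  have key : ∀ z : EuclideanSpace ℝ (Fin n), dist z c = h → (inner ℝ (z - c) u : ℝ) = 0 →
      (χ z = χ A ∨ χ z = χ B) := by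
    intro z hz1 hz2
    set e' : EuclideanSpace ℝ (Fin n) := h⁻¹ • (z - c) with he'def
    have hzc : ‖z - c‖ = h := by rw [← dist_eq_norm, hz1]
    have he' : ‖e'‖ = 1 := by
      rw [he'def, norm_smul, Real.norm_eq_abs, abs_of_pos (by positivity), hzc,
        inv_mul_cancel₀ (ne_of_gt hh)]
    have hue' : (inner ℝ u e' : ℝ) = 0 := by
      rw [he'def, real_inner_smul_right, real_inner_comm, hz2, mul_zero]
    obtain ⟨L, hL1, hL2⟩ := exists_linIsom_pair u' e u e' hu' he hu he' hue hue'
    set g : EuclideanSpace ℝ (Fin n) ≃ᵢ EuclideanSpace ℝ (Fin n) :=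
      ((IsometryEquiv.subRight c₀).trans L.toIsometryEquiv).trans
        (IsometryEquiv.addLeft c) with hgdef
    have hgapp : ∀ x, g x = c + L (x - c₀) := fun x => rfl
    have hgp : g p = A := by
      rw [hgapp, hpc₀, L.map_smul, hL1, hcdef, neg_smul]; abel
    have hgq : g q = B := by
      rw [hgapp, hqc₀, L.map_smul, hL1, ← hBc]; abel
    have hgr : g r = z := by
      rw [hgapp, hre, L.map_smul, hL2]
      have : h • e' = z - c := by
        rw [he'def, smul_smul, mul_inv_cancel₀ (ne_of_gt hh), one_smul]
      rw [this]; abel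
    have := hrain g
    rw [hgp, hgq, hgr] at this
    by_cases hzA : χ z = χ A
    · exact Or.inl hzA
    · exact Or.inr ((this hABne (fun hh' => hzA hh'.symm)).symm)
  refine ⟨f, fun x hx y hy => ?_⟩
  have hx1 := H1 x hx
  have hy1 := H1 y hy
  have hx2 := key (f x) hx1.1 hx1.2
  have hy2 := key (f y) hy1.1 hy1.2
  have hxy : decide (χ (f x) = χ A) = decide (χ (f y) = χ A) := H2 x hx y hy
  by_cases h1 : χ (f x) = χ A
  · have h2 : χ (f y) = χ A := of_decide_eq_true (by rw [← hxy]; exact decide_eq_true h1)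
    rw [h1, h2]
  · have h2 : ¬ (χ (f y) = χ A) := fun hyA =>
      h1 (of_decide_eq_true (by rw [hxy]; exact decide_eq_true hyA))
    rcases hx2 with h3 | h3
    · exact absurd h3 h1
    rcases hy2 with h4 | h4
    · exact absurd h4 h2
    rw [h3, h4]
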